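/- Let x ∈ ℝ^d with a unique index ℓ such that |x_ℓ| > |x_i| for all i ≠ ℓ. Then for each index i, the quantity |x_i|^{1/t} · log(∑_{j=1}^d |x_j/x_i|^{1/t}) / (∑_{j=1}^d |x_j|^{1/t}) tends to 0 as t → 0⁺, where if i ≠ ℓ we additionally assume x_i ≠ 0. -/

import Mathlib

open Filter Real

theorem summand_tendsto_zero (d : ℕ) (x : Fin d → ℝ) (ℓ : Fin d)
    (hℓ : ∀ i, i ≠ ℓ → |x i| < |x ℓ|) :
    ∀ i : Fin d, (i ≠ ℓ → x i ≠ 0) →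
      Tendsto
        (fun t : ℝ =>
          |x i| ^ (1 / t) * Real.log (∑ j, |x j / x i| ^ (1 / t)) /
            (∑ j, |x j| ^ (1 / t)))
        (nhdsWithin 0 (Set.Ioi 0)) (nhds 0) := by
  intro i hi
  by_cases hx : x i = 0
  · -- the whole function is eventually 0
    have h0 : ∀ᶠ t in nhdsWithin (0:ℝ) (Set.Ioi 0),
        (0:ℝ) = |x i| ^ (1 / t) * Real.log (∑ j, |x j / x i| ^ (1 / t)) /
            (∑ j, |x j| ^ (1 / t)) := by
      filter_upwards [self_mem_nhdsWithin] with t ht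
      have ht' : (1:ℝ)/t ≠ 0 := by
        have : (0:ℝ) < t := ht
        positivity
      rw [hx, abs_zero, Real.zero_rpow ht', zero_mul, zero_div]
    exact tendsto_const_nhds.congr' h0
  -- main case : x i ≠ 0
  have ha : 0 < |x i| := abs_pos.2 hx
  -- key pointwise identity on Ioi 0
  have key : ∀ t : ℝ,
      |x i| ^ (1 / t) * Real.log (∑ j, |x j / x i| ^ (1 / t)) /
            (∑ j, |x j| ^ (1 / t))
        = Real.log (∑ j, |x j / x i| ^ (1 / t)) / (∑ j, |x j / x i| ^ (1 / t)) := by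
    intro t
    set s := (1:ℝ)/t
    have hP : (0:ℝ) < |x i| ^ s := Real.rpow_pos_of_pos ha s
    have hS : (∑ j, |x j| ^ s) = |x i| ^ s * ∑ j, |x j / x i| ^ s := by
      rw [Finset.mul_sum]
      refine Finset.sum_congr rfl fun j _ => ?_
      rw [abs_div, Real.div_rpow (abs_nonneg _) (abs_nonneg _),
        mul_div_cancel₀ _ (ne_of_gt hP)]
    rw [hS, mul_div_mul_left _ _ (ne_of_gt hP)]
  simp only [key]
  by_cases hiℓ : i = ℓ
  · -- T tends to 1, and log y / y is continuous at 1
    subst hiℓ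
    have hT : Tendsto (fun t : ℝ => ∑ j, |x j / x i| ^ (1 / t))
        (nhdsWithin 0 (Set.Ioi 0)) (nhds 1) := by
      have hsum : Tendsto (fun t : ℝ => ∑ j, |x j / x i| ^ (1 / t))
          (nhdsWithin 0 (Set.Ioi 0)) (nhds (∑ j, if j = i then (1:ℝ) else 0)) := by
        refine tendsto_finset_sum _ fun j _ => ?_
        by_cases hj : j = i
        · subst hj
          have : ∀ t : ℝ, |x j / x j| ^ (1/t) = 1 := by
            intro t
            rw [div_self hx, abs_one, Real.one_rpow]
          simp only [this]
          simpa using tendsto_const_nhds.congr fun t => (this t).symm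
        · have hb0 : 0 ≤ |x j / x i| := abs_nonneg _
          have hb1 : |x j / x i| < 1 := by
            rw [abs_div, div_lt_one ha]
            exact hℓ j hj
          have hbase : Tendsto (fun s : ℝ => |x j / x i| ^ s) atTop (nhds 0) :=
            tendsto_rpow_atTop_of_base_lt_one _ (by linarith) hb1
          have hinv : Tendsto (fun t : ℝ => 1/t) (nhdsWithin (0:ℝ) (Set.Ioi 0)) atTop := by
            simpa [one_div] using tendsto_inv_nhdsGT_zero (𝕜 := ℝ)
          simpa [hj, Function.comp_def] using hbase.comp hinv
      simpa using hsum
    have hcont : ContinuousAt (fun y : ℝ => Real.log y / y) 1 := by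
      exact ContinuousAt.div (Real.continuousAt_log one_ne_zero) continuousAt_id one_ne_zero
    have := hcont.tendsto.comp hT
    simpa [Function.comp_def] using this
  · -- T tends to atTop, and log y / y → 0 at atTop
    have hMa : 1 < |x ℓ / x i| := by
      rw [abs_div, lt_div_iff₀ ha, one_mul]
      exact hℓ i hiℓ
    have hbase : Tendsto (fun s : ℝ => |x ℓ / x i| ^ s) atTop atTop := by
      have h1 : ∀ s : ℝ, |x ℓ / x i| ^ s = Real.exp (Real.log |x ℓ / x i| * s) := by
        intro s
        rw [Real.rpow_def_of_pos (by linarith)]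
      simp only [h1]
      exact Real.tendsto_exp_atTop.comp
        (Tendsto.const_mul_atTop (Real.log_pos hMa) tendsto_id)
    have hinv : Tendsto (fun t : ℝ => 1/t) (nhdsWithin (0:ℝ) (Set.Ioi 0)) atTop := by
      simpa [one_div] using tendsto_inv_nhdsGT_zero (𝕜 := ℝ)
    have hT : Tendsto (fun t : ℝ => ∑ j, |x j / x i| ^ (1 / t))
        (nhdsWithin 0 (Set.Ioi 0)) atTop := by
      refine tendsto_atTop_mono (fun t => ?_) (hbase.comp hinv)
      exact Finset.single_le_sum (f := fun j => |x j / x i| ^ (1/t))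
        (fun j _ => Real.rpow_nonneg (abs_nonneg _) _) (Finset.mem_univ ℓ)
    have hlog : Tendsto (fun y : ℝ => Real.log y / y) atTop (nhds 0) :=
      Real.isLittleO_log_id_atTop.tendsto_div_nhds_zero
    exact hlog.comp hT
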